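/- Let r ≥ 4 and let A₁,...,A_r ⊆ {1,...,n} be sum-free sets. Let D_{r} ∪ D_{r−1} be the set of elements of {1,...,n} lying in at least r − 1 of the sets A₁,...,A_r. Then D_r ∪ D_{r−1} is sum-free; consequently |D_{r−1}| + |D_r| ≤ ⌈n/2⌉. -/
import Mathlib

lemma sumfree_card_le_aux (n : ℕ) (D : Finset ℕ) (hD : D ⊆ Finset.Icc 1 n)
    (h : ∀ x ∈ D, ∀ y ∈ D, x + y ∉ D) : D.card ≤ (n + 1) / 2 := by
  rcases D.eq_empty_or_nonempty with rfl | hne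
  · simp
  obtain ⟨m, hmD, hmax⟩ := D.exists_max_image id hne
  simp only [id] at hmax
  have hm1 : 1 ≤ m := (Finset.mem_Icc.1 (hD hmD)).1
  have hmn : m ≤ n := (Finset.mem_Icc.1 (hD hmD)).2
  set S := D.erase m with hS
  have hSlt : ∀ x ∈ S, x < m := by
    intro x hx
    exact lt_of_le_of_ne (hmax x (Finset.mem_of_mem_erase hx)) (Finset.ne_of_mem_erase hx)
  set T := S.image (fun x => m - x) with hT
  have hTcard : T.card = S.card := by
    apply Finset.card_image_of_injOn
    intro a ha b hb hab
    simp only at hab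
    have := hSlt a ha; have := hSlt b hb
    omega
  have hdisj : Disjoint S T := by
    rw [Finset.disjoint_right]
    intro y hy hyS
    obtain ⟨x, hx, rfl⟩ := Finset.mem_image.1 hy
    have hxlt := hSlt x hx
    have hxD : x ∈ D := Finset.mem_of_mem_erase hx
    have hyD : m - x ∈ D := Finset.mem_of_mem_erase hyS
    have : x + (m - x) = m := by omega
    exact h x hxD (m - x) hyD (by rwa [this])
  have hsub : S ∪ T ⊆ Finset.Icc 1 (m - 1) := by
    intro y hy
    rcases Finset.mem_union.1 hy with hy | hy
    · have h1 := (Finset.mem_Icc.1 (hD (Finset.mem_of_mem_erase hy))).1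
      have := hSlt y hy
      exact Finset.mem_Icc.2 ⟨h1, by omega⟩
    · obtain ⟨x, hx, rfl⟩ := Finset.mem_image.1 hy
      have h1 := (Finset.mem_Icc.1 (hD (Finset.mem_of_mem_erase hx))).1
      have := hSlt x hx
      exact Finset.mem_Icc.2 ⟨by omega, by omega⟩
  have hcard : S.card + T.card ≤ m - 1 := by
    have := Finset.card_le_card hsub
    rw [Finset.card_union_of_disjoint hdisj] at this
    simpa using this
  have hScard : S.card = D.card - 1 := by
    rw [hS, Finset.card_erase_of_mem hmD]
  have hD1 : 1 ≤ D.card := Finset.card_pos.2 hne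
  omega

theorem high_multiplicity_sumfree (n r : ℕ) (hn : 1 ≤ n) (hr : 4 ≤ r)
    (A : Fin r → Finset ℕ) (hsub : ∀ i, A i ⊆ Finset.Icc 1 n)
    (hsf : ∀ i, ∀ x ∈ A i, ∀ y ∈ A i, x + y ∉ A i) :
    (∀ x ∈ (Finset.Icc 1 n).filter
        (fun z => r - 1 ≤ (Finset.univ.filter (fun i : Fin r => z ∈ A i)).card),
      ∀ y ∈ (Finset.Icc 1 n).filter
        (fun z => r - 1 ≤ (Finset.univ.filter (fun i : Fin r => z ∈ A i)).card),
        x + y ∉ (Finset.Icc 1 n).filter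
          (fun z => r - 1 ≤ (Finset.univ.filter (fun i : Fin r => z ∈ A i)).card)) ∧
    ((Finset.Icc 1 n).filter
        (fun z => r - 1 ≤ (Finset.univ.filter (fun i : Fin r => z ∈ A i)).card)).card
      ≤ (n + 1) / 2 := by
  set D := (Finset.Icc 1 n).filter
      (fun z => r - 1 ≤ (Finset.univ.filter (fun i : Fin r => z ∈ A i)).card) with hDdef
  have hsf' : ∀ x ∈ D, ∀ y ∈ D, x + y ∉ D := by
    intro x hx y hy hz
    have hx' := (Finset.mem_filter.1 hx).2
    have hy' := (Finset.mem_filter.1 hy).2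
    have hz' := (Finset.mem_filter.1 hz).2
    set Sx := Finset.univ.filter (fun i : Fin r => x ∈ A i)
    set Sy := Finset.univ.filter (fun i : Fin r => y ∈ A i)
    set Sz := Finset.univ.filter (fun i : Fin r => x + y ∈ A i)
    have key : (Sx ∩ Sy ∩ Sz).Nonempty := by
      rw [← Finset.card_pos]
      have h1 : (Sxᶜ ∪ Syᶜ ∪ Szᶜ).card ≤ Sxᶜ.card + Syᶜ.card + Szᶜ.card := by
        calc (Sxᶜ ∪ Syᶜ ∪ Szᶜ).card ≤ (Sxᶜ ∪ Syᶜ).card + Szᶜ.card :=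
              Finset.card_union_le _ _
          _ ≤ Sxᶜ.card + Syᶜ.card + Szᶜ.card := by
              have := Finset.card_union_le Sxᶜ Syᶜ; omega
      have hcx : Sxᶜ.card ≤ 1 := by
        have := Finset.card_compl Sx
        simp only [Fintype.card_fin] at this
        omega
      have hcy : Syᶜ.card ≤ 1 := by
        have := Finset.card_compl Sy
        simp only [Fintype.card_fin] at this
        omega
      have hcz : Szᶜ.card ≤ 1 := by
        have := Finset.card_compl Sz
        simp only [Fintype.card_fin] at this
        omega
      have heq : Sx ∩ Sy ∩ Sz = (Sxᶜ ∪ Syᶜ ∪ Szᶜ)ᶜ := by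
        simp [Finset.compl_union]
      rw [heq, Finset.card_compl, Fintype.card_fin]
      omega
    obtain ⟨i, hi⟩ := key
    simp only [Sx, Sy, Sz, Finset.mem_inter, Finset.mem_filter] at hi
    exact hsf i x hi.1.1.2 y hi.1.2.2 hi.2.2
  exact ⟨hsf', sumfree_card_le_aux n D (Finset.filter_subset _ _) hsf'⟩
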